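/- Let F and G be skew-symmetric m×m matrices over F_q of the same rank, with char F_q ≠ 2. Then the number of skew-symmetric matrices A of rank at most 2t with tr(FA) ≠ 0 equals the number of skew-symmetric matrices A of rank at most 2t with tr(GA) ≠ 0. -/

import Mathlib

open Matrix
def IsSkewSym {K : Type} [Field K] {m : ℕ} (A : Matrix (Fin m) (Fin m) K) : Prop :=
  Aᵀ = -A ∧ ∀ i, A i i = 0

def Estd (K : Type) [Field K] (k m : ℕ) : Matrix (Fin m) (Fin m) K :=
  Matrix.of fun i j =>
    if j.val = i.val + 1 ∧ i.val % 2 = 0 ∧ j.val < 2*k then 1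
    else if i.val = j.val + 1 ∧ j.val % 2 = 0 ∧ i.val < 2*k then -1 else 0

noncomputable def na (K : Type) [Field K] (r m : ℕ) : ℕ :=
  Nat.card {A : Matrix (Fin m) (Fin m) K // IsSkewSym A ∧ A.rank = r}

noncomputable def Na (K : Type) [Field K] (r m : ℕ) : ℕ :=
  Nat.card {A : Matrix (Fin m) (Fin m) K // IsSkewSym A ∧ A.rank ≤ r}

noncomputable def wSmall (K : Type) [Field K] (k r m : ℕ) : ℕ :=
  Nat.card {A : Matrix (Fin m) (Fin m) K //
    IsSkewSym A ∧ A.rank = 2*r ∧ Matrix.trace (Estd K k m * A) ≠ 0}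

noncomputable def Wcap (K : Type) [Field K] (k t m : ℕ) : ℕ :=
  Nat.card {A : Matrix (Fin m) (Fin m) K //
    IsSkewSym A ∧ A.rank ≤ 2*t ∧ Matrix.trace (Estd K k m * A) ≠ 0}

noncomputable def projWt (K : Type) [Field K] (m t : ℕ)
    (φ : Matrix (Fin m) (Fin m) K →ₗ[K] K) : ℕ :=
  Nat.card {x : Projectivization K (Matrix (Fin m) (Fin m) K) //
    ∃ (A : Matrix (Fin m) (Fin m) K) (h : A ≠ 0),
      x = Projectivization.mk K A h ∧ IsSkewSym A ∧ A.rank ≤ 2*t ∧ φ A ≠ 0}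


section EstdLemmas
variable {K : Type} [Field K]

lemma estd_eq_zero {k m : ℕ} {i j : Fin m}
    (h1 : ¬(j.val = i.val + 1 ∧ i.val % 2 = 0 ∧ j.val < 2*k))
    (h2 : ¬(i.val = j.val + 1 ∧ j.val % 2 = 0 ∧ i.val < 2*k)) :
    Estd K k m i j = 0 := by
  simp only [Estd, of_apply, if_neg h1, if_neg h2]

lemma estd_eq_one {k m : ℕ} {i j : Fin m}
    (h1 : j.val = i.val + 1 ∧ i.val % 2 = 0 ∧ j.val < 2*k) :
    Estd K k m i j = 1 := by
  simp only [Estd, of_apply, if_pos h1]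

lemma estd_eq_negone {k m : ℕ} {i j : Fin m}
    (h1 : ¬(j.val = i.val + 1 ∧ i.val % 2 = 0 ∧ j.val < 2*k))
    (h2 : i.val = j.val + 1 ∧ j.val % 2 = 0 ∧ i.val < 2*k) :
    Estd K k m i j = -1 := by
  simp only [Estd, of_apply, if_neg h1, if_pos h2]

lemma estd_zero_entry (n : ℕ) (i j : Fin n) : Estd K 0 n i j = 0 :=
  estd_eq_zero (by omega) (by omega)

lemma estd_shift (k n : ℕ) (i j : Fin n) :
    Estd K (k+1) (n+2) i.succ.succ j.succ.succ = Estd K k n i j := by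
  simp only [Estd, of_apply, Fin.val_succ]
  split_ifs <;> first | rfl | (exfalso; omega)

lemma estd_mul_diag (k m : ℕ) :
    Estd K k m * diagonal (fun i : Fin m => if i.val < 2*k then (1:K) else 0) = Estd K k m := by
  ext i j
  rw [mul_diagonal]
  by_cases h : j.val < 2*k
  · simp [h]
  · rw [estd_eq_zero (by omega) (by omega)]
    simp

lemma estd_mul_transpose (k m : ℕ) (h2k : 2*k ≤ m) :
    Estd K k m * (Estd K k m)ᵀ
      = diagonal (fun i : Fin m => if i.val < 2*k then (1:K) else 0) := by
  ext i j
  rw [mul_apply]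
  simp only [transpose_apply]
  by_cases hi : i.val < 2*k
  · by_cases hpar : i.val % 2 = 0
    · have hi1 : i.val + 1 < m := by omega
      rw [Finset.sum_eq_single (⟨i.val + 1, hi1⟩ : Fin m)]
      · have e1 : Estd K k m i ⟨i.val + 1, hi1⟩ = 1 := estd_eq_one ⟨rfl, hpar, by simp only [Fin.val_mk]; omega⟩
        have e2 : Estd K k m j ⟨i.val + 1, hi1⟩ = if i = j then 1 else 0 := by
          by_cases hij : i = j
          · subst hij; rw [e1, if_pos rfl]
          · have hv : i.val ≠ j.val := fun h => hij (Fin.ext h)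
            rw [if_neg hij, estd_eq_zero (by simp only [Fin.val_mk]; omega)
              (by simp only [Fin.val_mk]; omega)]
        rw [e1, e2, one_mul, diagonal_apply]
        by_cases hij : i = j
        · rw [if_pos hij, if_pos hij]; subst hij; rw [if_pos hi]
        · rw [if_neg hij, if_neg hij]
      · intro l _ hl
        have hlv : l.val ≠ i.val + 1 := fun hc => hl (Fin.ext (by simpa using hc))
        rw [estd_eq_zero (by omega) (by omega), zero_mul]
      · intro h; exact absurd (Finset.mem_univ _) h
    · have hi1 : i.val - 1 < m := by omega
      rw [Finset.sum_eq_single (⟨i.val - 1, hi1⟩ : Fin m)]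
      · have e1 : Estd K k m i ⟨i.val - 1, hi1⟩ = -1 := estd_eq_negone
          (by simp only [Fin.val_mk]; omega)
          ⟨by simp only [Fin.val_mk]; omega, by simp only [Fin.val_mk]; omega, hi⟩
        have e2 : Estd K k m j ⟨i.val - 1, hi1⟩ = if i = j then -1 else 0 := by
          by_cases hij : i = j
          · subst hij; rw [e1, if_pos rfl]
          · have hv : i.val ≠ j.val := fun h => hij (Fin.ext h)
            rw [if_neg hij, estd_eq_zero (by simp only [Fin.val_mk]; omega)
              (by simp only [Fin.val_mk]; omega)]
        rw [e1, e2, diagonal_apply]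
        by_cases hij : i = j
        · rw [if_pos hij, if_pos hij]; subst hij; rw [if_pos hi]; ring
        · rw [if_neg hij, if_neg hij]; ring
      · intro l _ hl
        have hlv : l.val ≠ i.val - 1 := fun hc => hl (Fin.ext (by simpa using hc))
        rw [estd_eq_zero (by omega) (by omega), zero_mul]
      · intro h; exact absurd (Finset.mem_univ _) h
  · have hrow : ∀ l : Fin m, Estd K k m i l = 0 := fun l =>
      estd_eq_zero (by omega) (by omega)
    simp only [hrow, zero_mul, Finset.sum_const_zero, diagonal_apply]
    by_cases hij : i = j
    · rw [if_pos hij]; subst hij; rw [if_neg hi]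
    · rw [if_neg hij]

lemma rank_estd (k m : ℕ) (h2k : 2*k ≤ m) : (Estd K k m).rank = 2*k := by
  classical
  have hcard : Fintype.card {i : Fin m // ¬(if i.val < 2*k then (1:K) else 0) = 0} = 2*k := by
    have he : {i : Fin m // ¬(if i.val < 2*k then (1:K) else 0) = 0} ≃ Fin (2*k) :=
      { toFun := fun x => ⟨x.1.val, by
          by_cases h : x.1.val < 2*k
          · exact h
          · exact absurd (if_neg h) (fun hh => x.2 hh)⟩
        invFun := fun y => ⟨⟨y.val, by omega⟩, by
          simp only [if_pos (show (y:ℕ) < 2*k from y.2)]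
          exact one_ne_zero⟩
        left_inv := fun x => Subtype.ext (Fin.ext rfl)
        right_inv := fun y => Fin.ext rfl }
    rw [Fintype.card_congr he, Fintype.card_fin]
  have hd := rank_diagonal (fun i : Fin m => if i.val < 2*k then (1:K) else 0)
  have hle : (Estd K k m).rank ≤ 2*k := by
    calc (Estd K k m).rank = (Estd K k m * diagonal fun i : Fin m =>
          if i.val < 2*k then (1:K) else 0).rank := by rw [estd_mul_diag]
    _ ≤ (diagonal fun i : Fin m => if i.val < 2*k then (1:K) else 0).rank :=
        rank_mul_le_right _ _
    _ = 2*k := by rw [hd, hcard]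
  have hge : 2*k ≤ (Estd K k m).rank := by
    calc 2*k = (diagonal fun i : Fin m => if i.val < 2*k then (1:K) else 0).rank := by
          rw [hd, hcard]
    _ = (Estd K k m * (Estd K k m)ᵀ).rank := by rw [estd_mul_transpose k m h2k]
    _ ≤ (Estd K k m).rank := rank_mul_le_left _ _
  omega
end EstdLemmas

section Symp
variable {K : Type} [Field K]

theorem symp_basis :
    ∀ (n : ℕ) (V : Type) [AddCommGroup V] [Module K V] [FiniteDimensional K V],
      Module.finrank K V = n → ∀ B : LinearMap.BilinForm K V, (∀ x, B x x = 0) →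
      ∃ (k : ℕ) (b : Module.Basis (Fin n) K V), 2*k ≤ n ∧ ∀ i j, B (b i) (b j) = Estd K k n i j := by
  intro n
  induction n using Nat.strong_induction_on with
  | _ n IH =>
    intro V _ _ _ hn B halt
    have hadd : ∀ x y : V, B x y + B y x = 0 := by
      intro x y
      have h2 := halt (x + y)
      simp only [map_add, LinearMap.add_apply, halt, add_zero, zero_add] at h2
      linear_combination h2
    have hskew : ∀ x y : V, B x y = - B y x := fun x y =>
      eq_neg_of_add_eq_zero_left (hadd x y)
    have hrefl : B.IsRefl := fun x y h => by
      have := hadd x y; rw [h] at this; simpa using this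
    by_cases hB : ∀ x y : V, B x y = 0
    · exact ⟨0, Module.finBasisOfFinrankEq K V hn, by omega,
        fun i j => by rw [hB, estd_zero_entry]⟩
    · push_neg at hB
      obtain ⟨u, v0, huv0⟩ := hB
      set v : V := (B u v0)⁻¹ • v0 with hv
      have hBuv : B u v = 1 := by
        rw [hv, _root_.map_smul, smul_eq_mul, inv_mul_cancel₀ huv0]
      have hBvu : B v u = -1 := by rw [hskew v u, hBuv]
      have hli2 : LinearIndependent K ![u, v] := by
        rw [LinearIndependent.pair_iff]
        intro s t hst
        have h1 : B (s • u + t • v) v = s := by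
          simp [map_add, _root_.map_smul, smul_eq_mul, hBuv, halt]
        have h2 : B (s • u + t • v) u = -t := by
          simp [map_add, _root_.map_smul, smul_eq_mul, hBvu, halt]
        rw [hst] at h1 h2
        simp only [map_zero, LinearMap.zero_apply] at h1 h2
        exact ⟨h1.symm, by linear_combination h2⟩
      set W : Submodule K V := Submodule.span K (Set.range ![u, v]) with hW
      have huW : u ∈ W := Submodule.subset_span ⟨0, rfl⟩
      have hvW : v ∈ W := Submodule.subset_span ⟨1, rfl⟩
      have hfW : Module.finrank K W = 2 := by
        rw [finrank_span_eq_card hli2, Fintype.card_fin]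
      have hrange : Set.range ![u, v] = {u, v} := by
        ext x
        simp only [Set.mem_range, Fin.exists_fin_two, Set.mem_insert_iff, Set.mem_singleton_iff]
        constructor
        · rintro (h | h) <;> [left; right] <;> exact h.symm
        · rintro (h | h) <;> [left; right] <;> exact h.symm
      have hnd : (B.restrict W).Nondegenerate := by
        refine (LinearMap.IsRefl.nondegenerate_iff_separatingLeft (B := B.restrict W) (fun x y h => hrefl _ _ h)).mpr ?_
        rintro ⟨w, hw⟩ h0
        have hw' : ∃ a b : K, a • u + b • v = w := by
          rw [hW, hrange, Submodule.mem_span_pair] at hw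
          exact hw
        obtain ⟨a, bb, hab⟩ := hw'
        have h0' : ∀ y ∈ W, B w y = 0 := fun y hy => by
          have := h0 ⟨y, hy⟩
          simpa [LinearMap.BilinForm.restrict_apply] using this
        have ha : a = 0 := by
          have := h0' v hvW
          rw [← hab] at this
          simpa [map_add, _root_.map_smul, smul_eq_mul, hBuv, halt] using this
        have hb : bb = 0 := by
          have := h0' u huW
          rw [← hab] at this
          simp only [map_add, _root_.map_smul, LinearMap.add_apply, LinearMap.smul_apply,
            smul_eq_mul, hBvu, halt, mul_zero, zero_add, mul_neg, mul_one] at this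
          linear_combination -this
        have : w = 0 := by rw [← hab, ha, hb]; simp
        exact Subtype.ext this
      have hcompl := LinearMap.BilinForm.isCompl_orthogonal_of_restrict_nondegenerate hrefl hnd
      set O : Submodule K V := B.orthogonal W with hO
      have hdim : Module.finrank K W + Module.finrank K O = n := by
        rw [Submodule.finrank_add_eq_of_isCompl hcompl, hn]
      obtain ⟨n', rfl⟩ : ∃ n', n = n' + 2 := ⟨n - 2, by omega⟩
      have hfO : Module.finrank K O = n' := by omega
      obtain ⟨k', c, hk', hc⟩ := IH n' (by omega) O hfO (B.restrict O)
        (fun x => halt x)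
      have hc' : ∀ p q, B (c p : V) (c q : V) = Estd K k' n' p q := by
        intro p q
        have := hc p q
        simpa [LinearMap.BilinForm.restrict_apply] using this
      have horth : ∀ (w : O) (x : V), x ∈ W → B x (w : V) = 0 := fun w x hx => w.2 x hx
      have horth' : ∀ (w : O) (x : V), x ∈ W → B (w : V) x = 0 := fun w x hx =>
        hrefl _ _ (horth w x hx)
      set d : Fin (n'+2) → V := Fin.cons u (Fin.cons v (fun i => (c i : V))) with hd
      have hli : LinearIndependent K d := by
        rw [Fintype.linearIndependent_iff]
        intro g hg
        rw [Fin.sum_univ_succ, Fin.sum_univ_succ] at hg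
        simp only [hd, Fin.cons_zero, Fin.cons_succ] at hg
        set w : O := ∑ i : Fin n', g i.succ.succ • c i with hw
        have hwv : (w : V) = ∑ i : Fin n', g i.succ.succ • (c i : V) := by
          simp [hw]
        rw [← hwv, ← add_assoc] at hg
        have e0 : g 0 = 0 := by
          have h := congrArg (fun x => B x v) hg
          simpa [map_add, _root_.map_smul, LinearMap.add_apply, LinearMap.smul_apply,
            smul_eq_mul, hBuv, halt, horth' w v hvW] using h
        have e1 : g (Fin.succ 0) = 0 := by
          have h := congrArg (fun x => B u x) hg
          simpa [map_add, _root_.map_smul, smul_eq_mul, hBuv, halt,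
            horth w u huW] using h
        have hw0 : w = 0 := by
          rw [e0, e1] at hg
          simpa using hg
        have hsum0 : ∑ i : Fin n', g i.succ.succ • c i = 0 := by rw [← hw, hw0]
        have hcoef := Fintype.linearIndependent_iff.mp c.linearIndependent
          (fun i => g i.succ.succ) hsum0
        intro i
        refine Fin.cases e0 (fun j => ?_) i
        refine Fin.cases e1 (fun l => ?_) j
        exact hcoef l
      have hcardeq : Fintype.card (Fin (n'+2)) = Module.finrank K V := by
        rw [Fintype.card_fin, hn]
      refine ⟨k' + 1, basisOfLinearIndependentOfCardEqFinrank hli hcardeq, by omega, ?_⟩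
      have hbe : ⇑(basisOfLinearIndependentOfCardEqFinrank hli hcardeq) = d :=
        coe_basisOfLinearIndependentOfCardEqFinrank _ _
      intro i j
      rw [hbe]
      have hud : d 0 = u := by simp [hd]
      have hvd : ∀ p : Fin (n'+1), d p.succ = (Fin.cons v (fun i => (c i : V)) : Fin (n'+1) → V) p := by
        intro p; simp [hd]
      refine Fin.cases ?_ (fun p => ?_) i
      · refine Fin.cases ?_ (fun q => ?_) j
        · rw [hud, halt u, estd_eq_zero (by omega) (by omega)]
        · refine Fin.cases ?_ (fun q' => ?_) q
          · rw [hud, hvd 0, Fin.cons_zero, hBuv]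
            rw [estd_eq_one ⟨by simp only [Fin.val_succ, Fin.val_zero], by simp only [Fin.val_zero],
              by simp only [Fin.val_succ, Fin.val_zero] <;> omega⟩]
          · rw [hud, hvd q'.succ, Fin.cons_succ]
            rw [horth (c q') u huW, estd_eq_zero (by simp only [Fin.val_succ, Fin.val_zero] <;> omega)
              (by simp only [Fin.val_succ, Fin.val_zero] <;> omega)]
      · refine Fin.cases ?_ (fun p' => ?_) p
        · refine Fin.cases ?_ (fun q => ?_) j
          · rw [hvd 0, Fin.cons_zero, hud, hBvu]
            rw [estd_eq_negone (by simp only [Fin.val_succ, Fin.val_zero] <;> omega)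
              ⟨by simp only [Fin.val_succ, Fin.val_zero], by simp only [Fin.val_zero],
               by simp only [Fin.val_succ, Fin.val_zero] <;> omega⟩]
          · refine Fin.cases ?_ (fun q' => ?_) q
            · rw [hvd 0, Fin.cons_zero, halt v, estd_eq_zero (by omega) (by omega)]
            · rw [hvd 0, Fin.cons_zero, hvd q'.succ, Fin.cons_succ]
              rw [horth (c q') v hvW, estd_eq_zero (by simp only [Fin.val_succ, Fin.val_zero] <;> omega)
                (by simp only [Fin.val_succ, Fin.val_zero] <;> omega)]
        · refine Fin.cases ?_ (fun q => ?_) j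
          · rw [hvd p'.succ, Fin.cons_succ, hud]
            rw [horth' (c p') u huW, estd_eq_zero (by simp only [Fin.val_succ, Fin.val_zero] <;> omega)
              (by simp only [Fin.val_succ, Fin.val_zero] <;> omega)]
          · refine Fin.cases ?_ (fun q' => ?_) q
            · rw [hvd p'.succ, Fin.cons_succ, hvd 0, Fin.cons_zero]
              rw [horth' (c p') v hvW, estd_eq_zero (by simp only [Fin.val_succ, Fin.val_zero] <;> omega)
                (by simp only [Fin.val_succ, Fin.val_zero] <;> omega)]
            · rw [hvd p'.succ, Fin.cons_succ, hvd q'.succ, Fin.cons_succ]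
              rw [hc' p' q', estd_shift]
end Symp

section MatrixCongr
variable {K : Type} [Field K]

lemma skew_alt {m : ℕ} (hchar : (2:K) ≠ 0) {F : Matrix (Fin m) (Fin m) K}
    (hF : Fᵀ = -F) (x : Fin m → K) : x ⬝ᵥ F *ᵥ x = 0 := by
  have hFe : F = -Fᵀ := by rw [hF, neg_neg]
  have h1 : x ⬝ᵥ F *ᵥ x = -(x ⬝ᵥ F *ᵥ x) := by
    calc x ⬝ᵥ F *ᵥ x = (x ᵥ* F) ⬝ᵥ x := dotProduct_mulVec x F x
    _ = (x ᵥ* (-Fᵀ)) ⬝ᵥ x := by rw [← hFe]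
    _ = -((x ᵥ* Fᵀ) ⬝ᵥ x) := by rw [Matrix.vecMul_neg, neg_dotProduct]
    _ = -((F *ᵥ x) ⬝ᵥ x) := by rw [vecMul_transpose]
    _ = -(x ⬝ᵥ F *ᵥ x) := by rw [dotProduct_comm]
  have h2 : (2:K) * (x ⬝ᵥ F *ᵥ x) = 0 := by
    rw [two_mul]
    nth_rewrite 1 [h1]
    ring
  rcases mul_eq_zero.mp h2 with h | h
  · exact absurd h hchar
  · exact h

theorem skew_congr_estd {m : ℕ} (hchar : (2:K) ≠ 0) (F : Matrix (Fin m) (Fin m) K)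
    (hF : Fᵀ = -F) :
    ∃ (k : ℕ) (P : Matrix (Fin m) (Fin m) K),
      2*k ≤ m ∧ IsUnit P.det ∧ Pᵀ * F * P = Estd K k m := by
  classical
  set B : LinearMap.BilinForm K (Fin m → K) := Matrix.toLinearMap₂' K F with hB
  have halt : ∀ x, B x x = 0 := fun x => by
    rw [hB, Matrix.toLinearMap₂'_apply']
    exact skew_alt hchar hF x
  obtain ⟨k, b, hk, hb⟩ := symp_basis m (Fin m → K)
    (by simp [Module.finrank_pi]) B halt
  set P : Matrix (Fin m) (Fin m) K := (Pi.basisFun K (Fin m)).toMatrix ⇑b with hP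
  have hPe : ∀ i j, P i j = b j i := by
    intro i j
    rw [hP, Module.Basis.toMatrix_apply, Pi.basisFun_repr]
  refine ⟨k, P, hk, ?_, ?_⟩
  · rw [hP, ← Module.Basis.det_apply]
    exact Module.Basis.isUnit_det _ _
  · ext i j
    have := hb i j
    rw [hB, Matrix.toLinearMap₂'_apply'] at this
    rw [← this]
    simp only [mul_apply, dotProduct, mulVec, dotProduct, hPe, transpose_apply,
      Finset.sum_mul, Finset.mul_sum]
    rw [Finset.sum_comm]
    refine Finset.sum_congr rfl fun x _ => Finset.sum_congr rfl fun y _ => by ring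
end MatrixCongr

section Final
variable {K : Type} [Field K]

lemma isSkewSym_of_transpose {m : ℕ} (hchar : (2:K) ≠ 0) {A : Matrix (Fin m) (Fin m) K}
    (h : Aᵀ = -A) : IsSkewSym A := by
  refine ⟨h, fun i => ?_⟩
  have h1 : A i i = - A i i := by
    conv_lhs => rw [show A i i = Aᵀ i i from rfl, h]
    simp
  have h2 : (2:K) * A i i = 0 := by rw [two_mul]; nth_rewrite 1 [h1]; ring
  rcases mul_eq_zero.mp h2 with h | h
  · exact absurd h hchar
  · exact h

lemma skew_conj {m : ℕ} (hchar : (2:K) ≠ 0) (R A : Matrix (Fin m) (Fin m) K)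
    (hA : Aᵀ = -A) : IsSkewSym (R * A * Rᵀ) := by
  apply isSkewSym_of_transpose hchar
  rw [transpose_mul, transpose_mul, transpose_transpose, hA]
  simp [Matrix.mul_assoc]

lemma rank_conj {m : ℕ} (R : Matrix (Fin m) (Fin m) K) (hR : IsUnit R.det)
    (A : Matrix (Fin m) (Fin m) K) : (R * A * Rᵀ).rank = A.rank := by
  have h1 : (R * (A * Rᵀ)).rank = (A * Rᵀ).rank :=
    rank_mul_eq_right_of_isUnit_det R (A * Rᵀ) hR
  have h2 : (A * Rᵀ).rank = A.rank :=
    rank_mul_eq_left_of_isUnit_det Rᵀ A (by rwa [det_transpose])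
  rw [Matrix.mul_assoc, h1, h2]

lemma myTraceConj {m : ℕ} (F R A : Matrix (Fin m) (Fin m) K) :
    Matrix.trace (F * (R * A * Rᵀ)) = Matrix.trace ((Rᵀ * F * R) * A) := by
  simp only [← Matrix.mul_assoc]
  rw [Matrix.trace_mul_comm (F * R * A) Rᵀ]
  simp only [← Matrix.mul_assoc]

lemma card_tr_congr {m t : ℕ} (hchar : (2:K) ≠ 0)
    (F G R : Matrix (Fin m) (Fin m) K) (hR : IsUnit R.det) (hFG : G = Rᵀ * F * R) :
    Nat.card {A : Matrix (Fin m) (Fin m) K //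
        IsSkewSym A ∧ A.rank ≤ 2*t ∧ Matrix.trace (F * A) ≠ 0}
      = Nat.card {A : Matrix (Fin m) (Fin m) K //
        IsSkewSym A ∧ A.rank ≤ 2*t ∧ Matrix.trace (G * A) ≠ 0} := by
  classical
  have hRt : IsUnit Rᵀ.det := by rwa [det_transpose]
  have hRinv : IsUnit R⁻¹.det := isUnit_nonsing_inv_det R hR
  have hRR : R⁻¹ * R = 1 := nonsing_inv_mul R hR
  have hRR' : R * R⁻¹ = 1 := mul_nonsing_inv R hR
  have hTT : Rᵀ * R⁻¹ᵀ = 1 := by rw [← transpose_mul, hRR, transpose_one]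
  have hTT' : R⁻¹ᵀ * Rᵀ = 1 := by rw [← transpose_mul, hRR', transpose_one]
  have hlinv : ∀ A : Matrix (Fin m) (Fin m) K, R⁻¹ * (R * A * Rᵀ) * R⁻¹ᵀ = A := fun A => by
    calc R⁻¹ * (R * A * Rᵀ) * R⁻¹ᵀ
        = (R⁻¹ * R) * (A * (Rᵀ * R⁻¹ᵀ)) := by simp only [Matrix.mul_assoc]
      _ = A := by rw [hRR, hTT, Matrix.one_mul, Matrix.mul_one]
  have hrinv : ∀ A : Matrix (Fin m) (Fin m) K, R * (R⁻¹ * A * R⁻¹ᵀ) * Rᵀ = A := fun A => by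
    calc R * (R⁻¹ * A * R⁻¹ᵀ) * Rᵀ
        = (R * R⁻¹) * (A * (R⁻¹ᵀ * Rᵀ)) := by simp only [Matrix.mul_assoc]
      _ = A := by rw [hRR', hTT', Matrix.one_mul, Matrix.mul_one]
  let e : Matrix (Fin m) (Fin m) K ≃ Matrix (Fin m) (Fin m) K :=
    { toFun := fun A => R * A * Rᵀ
      invFun := fun A => R⁻¹ * A * R⁻¹ᵀ
      left_inv := hlinv
      right_inv := hrinv }
  have he : ∀ A, e A = R * A * Rᵀ := fun A => rfl
  have hiff : ∀ A : Matrix (Fin m) (Fin m) K,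
      (IsSkewSym A ∧ A.rank ≤ 2*t ∧ Matrix.trace (G * A) ≠ 0)
        ↔ (IsSkewSym (e A) ∧ (e A).rank ≤ 2*t ∧ Matrix.trace (F * (e A)) ≠ 0) := by
    intro A
    rw [he]
    constructor
    · rintro ⟨hs, hr, htr⟩
      refine ⟨skew_conj hchar R A hs.1, ?_, ?_⟩
      · rwa [rank_conj R hR A]
      · rwa [myTraceConj, ← hFG]
    · rintro ⟨hs, hr, htr⟩
      refine ⟨?_, ?_, ?_⟩
      · have := skew_conj hchar R⁻¹ (R * A * Rᵀ) hs.1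
        rwa [hlinv A] at this
      · rwa [rank_conj R hR A] at hr
      · rwa [myTraceConj, ← hFG] at htr
  exact (Nat.card_congr (Equiv.subtypeEquiv e hiff)).symm

theorem stmt7 (K : Type) [Field K] [Fintype K] (hchar : ringChar K ≠ 2)
    (m t : ℕ) (ht : 2*t ≤ m)
    (F G : Matrix (Fin m) (Fin m) K) (hF : IsSkewSym F) (hG : IsSkewSym G)
    (hrank : F.rank = G.rank) :
    Nat.card {A : Matrix (Fin m) (Fin m) K //
        IsSkewSym A ∧ A.rank ≤ 2*t ∧ Matrix.trace (F * A) ≠ 0}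
      = Nat.card {A : Matrix (Fin m) (Fin m) K //
        IsSkewSym A ∧ A.rank ≤ 2*t ∧ Matrix.trace (G * A) ≠ 0} := by
  classical
  have h2 : (2:K) ≠ 0 := Ring.two_ne_zero hchar
  obtain ⟨kF, P, hkF, hP, hPF⟩ := skew_congr_estd h2 F hF.1
  obtain ⟨kG, Q, hkG, hQ, hQG⟩ := skew_congr_estd h2 G hG.1
  have hPt : IsUnit Pᵀ.det := by rwa [det_transpose]
  have hQt : IsUnit Qᵀ.det := by rwa [det_transpose]
  have hrF : F.rank = 2*kF := by
    have h := rank_estd (K := K) kF m hkF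
    rw [← hPF, rank_mul_eq_left_of_isUnit_det P (Pᵀ * F) hP,
      rank_mul_eq_right_of_isUnit_det Pᵀ F hPt] at h
    exact h
  have hrG : G.rank = 2*kG := by
    have h := rank_estd (K := K) kG m hkG
    rw [← hQG, rank_mul_eq_left_of_isUnit_det Q (Qᵀ * G) hQ,
      rank_mul_eq_right_of_isUnit_det Qᵀ G hQt] at h
    exact h
  have hkk : kF = kG := by omega
  have hPQ : Qᵀ * G * Q = Pᵀ * F * P := by rw [hPF, hQG, hkk]
  set R : Matrix (Fin m) (Fin m) K := P * Q⁻¹ with hRdef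
  have hR : IsUnit R.det := by
    rw [hRdef, det_mul]
    exact hP.mul (isUnit_nonsing_inv_det Q hQ)
  have hQQ : Q * Q⁻¹ = 1 := mul_nonsing_inv Q hQ
  have hQtQ : (Qᵀ)⁻¹ * Qᵀ = 1 := nonsing_inv_mul Qᵀ hQt
  have hG2 : G = Rᵀ * F * R := by
    calc G = ((Qᵀ)⁻¹ * Qᵀ) * G * (Q * Q⁻¹) := by
          rw [hQtQ, hQQ, Matrix.one_mul, Matrix.mul_one]
      _ = (Qᵀ)⁻¹ * (Qᵀ * G * Q) * Q⁻¹ := by simp only [Matrix.mul_assoc]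
      _ = (Qᵀ)⁻¹ * (Pᵀ * F * P) * Q⁻¹ := by rw [hPQ]
      _ = Rᵀ * F * R := by
          rw [hRdef, transpose_mul, Matrix.transpose_nonsing_inv]
          simp only [Matrix.mul_assoc]
  exact card_tr_congr h2 F G R hR hG2
end Final
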